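/- For integers 0 ≤ i ≤ q − 1 and 1 ≤ j ≤ q − 1, the set S_{i,j} has cardinality exactly q(q^3 − q − jq^2 + i + 1). -/
import Mathlib


/-- The set `S_{i,j}`. -/
def gkSij (q i j : ℤ) : Set ℤ :=
  {x : ℤ | ∃ k₁ k₂ : ℤ, 0 ≤ k₁ ∧ k₁ ≤ q - 1 ∧ 0 ≤ k₂ ∧ k₂ ≤ q ^ 3 - q - j * q ^ 2 + i ∧
    x = (i * q - j * q ^ 2 + k₁) * (q ^ 3 - q + 1) + (j * q ^ 2 - i + k₂) * (q ^ 3 + 1)}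

/-- The set `S_{i,j}` has cardinality `q(q^3 - q - jq^2 + i + 1)`. -/
theorem gk_Sij_card (q : ℤ) (hq : IsPrimePow q) (i j : ℤ)
    (hi0 : 0 ≤ i) (hi1 : i ≤ q - 1) (hj0 : 1 ≤ j) (hj1 : j ≤ q - 1) :
    ((gkSij q i j).ncard : ℤ) = q * (q ^ 3 - q - j * q ^ 2 + i + 1) := by
  have hq2 : 2 ≤ q := by omega
  set N : ℤ := q ^ 3 - q - j * q ^ 2 + i with hN
  have hN0 : 0 ≤ N := by nlinarith
  set f : ℤ × ℤ → ℤ := fun p =>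
    (i * q - j * q ^ 2 + p.1) * (q ^ 3 - q + 1) + (j * q ^ 2 - i + p.2) * (q ^ 3 + 1) with hf
  have hset : gkSij q i j =
      ↑(((Finset.Icc (0:ℤ) (q - 1)) ×ˢ Finset.Icc (0:ℤ) N).image f) := by
    ext x
    simp only [gkSij, Set.mem_setOf_eq, Finset.coe_image, Set.mem_image, Finset.mem_coe,
      Finset.mem_product, Finset.mem_Icc, hf]
    constructor
    · rintro ⟨k₁, k₂, h1, h2, h3, h4, h5⟩
      exact ⟨(k₁, k₂), ⟨⟨h1, h2⟩, ⟨h3, h4⟩⟩, h5.symm⟩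
    · rintro ⟨⟨k₁, k₂⟩, ⟨⟨h1, h2⟩, ⟨h3, h4⟩⟩, h5⟩
      exact ⟨k₁, k₂, h1, h2, h3, h4, h5.symm⟩
  have hcop : IsCoprime (q ^ 3 + 1) q := ⟨1, -q^2, by ring⟩
  have hinj : Set.InjOn f ↑((Finset.Icc (0:ℤ) (q - 1)) ×ˢ Finset.Icc (0:ℤ) N) := by
    rintro ⟨a₁, a₂⟩ ha ⟨b₁, b₂⟩ hb heq
    simp only [Finset.coe_product, Set.mem_prod, Finset.mem_coe, Finset.mem_Icc] at ha hb
    simp only [hf] at heq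
    have key : (a₁ - b₁) * (q ^ 3 + 1) - (a₁ - b₁) * q = (b₂ - a₂) * (q ^ 3 + 1) := by
      linear_combination heq
    have hdvd : (q ^ 3 + 1) ∣ (a₁ - b₁) * q := by
      exact ⟨a₁ - b₁ - (b₂ - a₂), by linear_combination -key⟩
    have hdvd1 : (q ^ 3 + 1) ∣ (a₁ - b₁) := hcop.dvd_of_dvd_mul_right hdvd
    obtain ⟨c, hc⟩ := hdvd1
    have hq3 : q ≤ q ^ 3 := by nlinarith
    have h9 : (0:ℤ) ≤ q ^ 3 + 1 := by nlinarith
    have hc0 : c = 0 := by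
      rcases lt_trichotomy c 0 with h | h | h
      · exfalso
        have h1 : (q ^ 3 + 1) * c ≤ (q ^ 3 + 1) * (-1) :=
          mul_le_mul_of_nonneg_left (by omega) h9
        have := ha.1.1; have := ha.1.2; have := hb.1.1; have := hb.1.2
        linarith
      · exact h
      · exfalso
        have h1 : (q ^ 3 + 1) * 1 ≤ (q ^ 3 + 1) * c :=
          mul_le_mul_of_nonneg_left (by omega) h9
        have := ha.1.1; have := ha.1.2; have := hb.1.1; have := hb.1.2
        linarith
    rw [hc0, mul_zero] at hc
    have hab1 : a₁ = b₁ := by omega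
    have hab2 : a₂ = b₂ := by
      have hb0 : (q ^ 3 + 1) ≠ 0 := by nlinarith
      have : (b₂ - a₂) * (q ^ 3 + 1) = 0 := by
        rw [← key, hab1]; ring
      rcases mul_eq_zero.mp this with h | h
      · omega
      · exact absurd h hb0
    simp [hab1, hab2]
  rw [hset, Set.ncard_coe_finset, Finset.card_image_of_injOn hinj, Finset.card_product,
    Int.card_Icc, Int.card_Icc]
  push_cast [Int.toNat_of_nonneg (by omega : (0:ℤ) ≤ q - 1 + 1 - 0),
    Int.toNat_of_nonneg (by omega : (0:ℤ) ≤ N + 1 - 0)]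
  ring
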